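/- Let n = 1, 1 < p ≤ q < ∞, and 0 < α < 1. There exist a pair of weights (u, σ) on ℝ with (u, σ) ∈ A_{p,q}^α and a nonnegative function f ∈ L^p(σ) such that M_α(fσ) ∉ L^q(u), i.e. ∫_ℝ M_α(fσ)^q u dx = ∞. In particular, the two-weight A_{p,q}^α condition is not sufficient for the strong type inequality M_α(·σ) : L^p(σ) → L^q(u). -/

import Mathlib

open MeasureTheory ENNReal Set Filter
open scoped NNReal

noncomputable section

abbrev Eucl (n : ℕ) := EuclideanSpace ℝ (Fin n)

/-- The half-open cube in `ℝⁿ` with corner `a` and side length `h`. -/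
def cube (n : ℕ) (a : Fin n → ℝ) (h : ℝ) : Set (Eucl n) :=
  {x | ∀ i, a i ≤ x i ∧ x i < a i + h}

/-- Average of an `ℝ≥0∞`-valued function over a set (w.r.t. Lebesgue measure). -/
def lavg {n : ℕ} (Q : Set (Eucl n)) (g : Eucl n → ℝ≥0∞) : ℝ≥0∞ :=
  (∫⁻ x in Q, g x) / volume Q

/-- `u(E) = ∫_E u dx` for a weight `u`. -/
def setW {n : ℕ} (u : Eucl n → ℝ) (s : Set (Eucl n)) : ℝ≥0∞ :=
  ∫⁻ x in s, ENNReal.ofReal (u x)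

/-- A weight: nonnegative, measurable, positive on a set of positive measure. -/
def Weight {n : ℕ} (u : Eucl n → ℝ) : Prop :=
  Measurable u ∧ (∀ x, 0 ≤ u x) ∧ 0 < volume {x | 0 < u x}

/-- The fractional maximal operator `M_α`. -/
def maxFn (n : ℕ) (α : ℝ) (f : Eucl n → ℝ) (x : Eucl n) : ℝ≥0∞ :=
  ⨆ (a : Fin n → ℝ) (h : ℝ) (_ : 0 < h) (_ : x ∈ cube n a h),
    volume (cube n a h) ^ (α / (n:ℝ)) * lavg (cube n a h) (fun y => ENNReal.ofReal |f y|)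

/-- The fractional maximal operator restricted to a family of cubes. -/
def maxFnGrid (n : ℕ) (α : ℝ) (D : Set (Set (Eucl n))) (f : Eucl n → ℝ) (x : Eucl n) : ℝ≥0∞ :=
  ⨆ (Q : Set (Eucl n)) (_ : Q ∈ D) (_ : x ∈ Q),
    volume Q ^ (α / (n:ℝ)) * lavg Q (fun y => ENNReal.ofReal |f y|)

/-- The fractional integral `I_α`, as a positive (`ℝ≥0∞`-valued) operator. -/
def fracIntE (n : ℕ) (α : ℝ) (f : Eucl n → ℝ) (x : Eucl n) : ℝ≥0∞ :=
  ∫⁻ y, ENNReal.ofReal (f y) * ENNReal.ofReal (‖x - y‖ ^ (α - (n:ℝ)))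

/-- The dyadic fractional integral associated to a family of cubes. -/
def fracIntGrid (n : ℕ) (α : ℝ) (D : Set (Set (Eucl n))) (f : Eucl n → ℝ) (x : Eucl n) : ℝ≥0∞ :=
  ∑' Q : D, Set.indicator (Q : Set (Eucl n))
    (fun _ => volume (Q : Set (Eucl n)) ^ (α / (n:ℝ)) *
      lavg (Q : Set (Eucl n)) (fun y => ENNReal.ofReal (f y))) x

/-- The standard dyadic grid `Δ`. -/
def stdGrid (n : ℕ) : Set (Set (Eucl n)) :=
  {Q | ∃ (k : ℤ) (m : Fin n → ℤ), Q = cube n (fun i => (2:ℝ) ^ k * (m i : ℝ)) ((2:ℝ) ^ k)}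

/-- The translated dyadic grids `𝒟^t`. -/
def transGrid (n : ℕ) (t : Fin n → ℝ) : Set (Set (Eucl n)) :=
  {Q | ∃ (j : ℤ) (m : Fin n → ℤ), Q = cube n (fun i => (2:ℝ) ^ j * ((m i : ℝ) + t i)) ((2:ℝ) ^ j)}

def thirds : Set ℝ := {0, 1/3, -1/3}

/-- A collection of cubes is a dyadic grid. -/
def IsDyadicGrid (n : ℕ) (D : Set (Set (Eucl n))) : Prop :=
  (∀ Q ∈ D, ∃ (a : Fin n → ℝ) (k : ℤ), Q = cube n a ((2:ℝ) ^ k)) ∧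
  (∀ P ∈ D, ∀ Q ∈ D, P ∩ Q = P ∨ P ∩ Q = Q ∨ P ∩ Q = ∅) ∧
  (∀ (k : ℤ) (x : Eucl n), ∃! Q, Q ∈ D ∧ (∃ a, Q = cube n a ((2:ℝ) ^ k)) ∧ x ∈ Q)

/-- The set `E(Q) = Q \ ⋃ {P ∈ S : P ⊊ Q}`. -/
def sparseE {n : ℕ} (S : Set (Set (Eucl n))) (Q : Set (Eucl n)) : Set (Eucl n) :=
  Q \ ⋃ P ∈ {P | P ∈ S ∧ P ⊂ Q}, P

/-- A sparse family of cubes. -/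
def IsSparse {n : ℕ} (S : Set (Set (Eucl n))) : Prop :=
  ∀ Q ∈ S, volume Q ≤ 2 * volume (sparseE S Q)

/-- The sparse linearized maximal operator `L_α^S`. -/
def sparseL (n : ℕ) (α : ℝ) (S : Set (Set (Eucl n))) (f : Eucl n → ℝ) (x : Eucl n) : ℝ≥0∞ :=
  ∑' Q : S, Set.indicator (sparseE S (Q : Set (Eucl n)))
    (fun _ => volume (Q : Set (Eucl n)) ^ (α / (n:ℝ)) *
      lavg (Q : Set (Eucl n)) (fun y => ENNReal.ofReal (f y))) x

/-- The Calderón–Zygmund cubes: the maximal cubes `Q ∈ Δ` with `⟨|f|⟩_Q > λ`. -/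
def czCubes (n : ℕ) (f : Eucl n → ℝ) (lam : ℝ) : Set (Set (Eucl n)) :=
  {Q | Q ∈ stdGrid n ∧ ENNReal.ofReal lam < lavg Q (fun y => ENNReal.ofReal |f y|) ∧
    ∀ P ∈ stdGrid n, Q ⊆ P →
      ENNReal.ofReal lam < lavg P (fun y => ENNReal.ofReal |f y|) → P = Q}

/-- The one-weight `A_{p,q}` constant, `1 < p`. -/
def apqConst (n : ℕ) (p q : ℝ) (w : Eucl n → ℝ) : ℝ≥0∞ :=
  ⨆ (a : Fin n → ℝ) (h : ℝ) (_ : 0 < h),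
    (lavg (cube n a h) (fun x => ENNReal.ofReal (w x ^ q))) ^ (1/q) *
    (lavg (cube n a h) (fun x => ENNReal.ofReal (w x ^ (-(p/(p-1)))))) ^ (1 - 1/p)

/-- The one-weight `A_{1,q}` constant. -/
def a1qConst (n : ℕ) (q : ℝ) (w : Eucl n → ℝ) : ℝ≥0∞ :=
  ⨆ (a : Fin n → ℝ) (h : ℝ) (_ : 0 < h),
    (lavg (cube n a h) (fun x => ENNReal.ofReal (w x ^ q))) ^ (1/q) *
    essSup (fun x => ENNReal.ofReal (w x)⁻¹) (volume.restrict (cube n a h))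

/-- The two-weight `A_{p,q}^α` constant. -/
def apqAlpha (n : ℕ) (α p q : ℝ) (u σ : Eucl n → ℝ) : ℝ≥0∞ :=
  ⨆ (a : Fin n → ℝ) (h : ℝ) (_ : 0 < h),
    volume (cube n a h) ^ (α / (n:ℝ) + 1/q - 1/p) *
    ((lavg (cube n a h) (fun x => ENNReal.ofReal (u x))) ^ (1/q) *
     (lavg (cube n a h) (fun x => ENNReal.ofReal (σ x))) ^ (1 - 1/p))

/-- Sawyer testing constant for the fractional maximal operator. -/
def maxTestConst (n : ℕ) (α p q : ℝ) (u σ : Eucl n → ℝ) : ℝ≥0∞ :=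
  ⨆ (a : Fin n → ℝ) (h : ℝ) (_ : 0 < h) (_ : 0 < setW σ (cube n a h)),
    setW σ (cube n a h) ^ (-(1/p)) *
    (∫⁻ x in cube n a h,
      (maxFn n α ((cube n a h).indicator σ) x) ^ q * ENNReal.ofReal (u x)) ^ (1/q)

/-- Sawyer testing constant for the fractional integral operator. -/
def fracTestConst (n : ℕ) (α p q : ℝ) (u σ : Eucl n → ℝ) : ℝ≥0∞ :=
  ⨆ (a : Fin n → ℝ) (h : ℝ) (_ : 0 < h) (_ : 0 < setW σ (cube n a h)),
    setW σ (cube n a h) ^ (-(1/p)) *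
    (∫⁻ x in cube n a h,
      (fracIntE n α ((cube n a h).indicator σ) x) ^ q * ENNReal.ofReal (u x)) ^ (1/q)

/-- The BMO seminorm. -/
def bmoNorm (n : ℕ) (b : Eucl n → ℝ) : ℝ≥0∞ :=
  ⨆ (a : Fin n → ℝ) (h : ℝ) (_ : 0 < h),
    lavg (cube n a h) (fun x => ENNReal.ofReal |b x - ⨍ y in cube n a h, b y|)

/-- The commutator `[b, I_α] f`. -/
def commFrac (n : ℕ) (α : ℝ) (b f : Eucl n → ℝ) (x : Eucl n) : ℝ :=
  ∫ y, (b x - b y) * f y * ‖x - y‖ ^ (α - (n:ℝ))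

/-- The dyadic commutator-type operator `C_b^D`. -/
def commGrid (n : ℕ) (α : ℝ) (D : Set (Set (Eucl n))) (b f : Eucl n → ℝ) (x : Eucl n) : ℝ≥0∞ :=
  ∑' Q : D, Set.indicator (Q : Set (Eucl n))
    (fun _ => volume (Q : Set (Eucl n)) ^ (α / (n:ℝ)) *
      lavg (Q : Set (Eucl n)) (fun y => ENNReal.ofReal (|b x - b y| * f y))) x

/-- Young functions. -/
def IsYoung (B : ℝ → ℝ) : Prop :=
  ContinuousOn B (Ici 0) ∧ ConvexOn ℝ (Ici 0) B ∧ StrictMonoOn B (Ici 0) ∧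
  B 0 = 0 ∧ Tendsto (fun t => B t / t) atTop atTop

/-- The associate Young function `B̄(t) = sup_{s>0} (st − B(s))`. -/
def youngConj (B : ℝ → ℝ) (t : ℝ) : ℝ :=
  sSup ((fun s => s * t - B s) '' Ioi 0)

/-- The `B_p` condition: `∫_1^∞ B(t)/t^p dt/t < ∞`. -/
def IsBp (B : ℝ → ℝ) (p : ℝ) : Prop :=
  IntegrableOn (fun t => B t / t ^ (p + 1)) (Ioi 1)

/-- The normalized Luxemburg norm of `f` on the cube `Q`. -/
def luxNorm {n : ℕ} (B : ℝ → ℝ) (Q : Set (Eucl n)) (f : Eucl n → ℝ) : ℝ :=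
  sInf {lam : ℝ | 0 < lam ∧ (⨍ x in Q, B (|f x| / lam)) ≤ 1}

/-- The separated bump constant `[u,σ]_{A_{p,q,B}^α}` (bump on the right). -/
def bumpRight (n : ℕ) (α p q : ℝ) (B : ℝ → ℝ) (u σ : Eucl n → ℝ) : ℝ≥0∞ :=
  ⨆ (a : Fin n → ℝ) (h : ℝ) (_ : 0 < h),
    volume (cube n a h) ^ (α / (n:ℝ) + 1/q - 1/p) *
    ((lavg (cube n a h) (fun x => ENNReal.ofReal (u x))) ^ (1/q) *
     ENNReal.ofReal (luxNorm B (cube n a h) (fun x => σ x ^ ((p-1)/p))))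

/-- The conjoined bump constant `[u,σ]_{A_{p,q,A,B}^α}`. -/
def bumpBoth (n : ℕ) (α p q : ℝ) (A B : ℝ → ℝ) (u σ : Eucl n → ℝ) : ℝ≥0∞ :=
  ⨆ (a : Fin n → ℝ) (h : ℝ) (_ : 0 < h),
    volume (cube n a h) ^ (α / (n:ℝ) + 1/q - 1/p) *
    (ENNReal.ofReal (luxNorm A (cube n a h) (fun x => u x ^ (1/q))) *
     ENNReal.ofReal (luxNorm B (cube n a h) (fun x => σ x ^ ((p-1)/p))))

/-- Strong operator norm of `I_α(·σ) : L^p(σ) → L^q(u)`. -/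
def strongNormI (n : ℕ) (α p q : ℝ) (u σ : Eucl n → ℝ) : ℝ≥0∞ :=
  ⨆ (f : Eucl n → ℝ) (_ : Measurable f)
    (_ : (∫⁻ x, ENNReal.ofReal |f x| ^ p * ENNReal.ofReal (σ x)) ≤ 1),
    (∫⁻ x, (fracIntE n α (fun y => |f y| * σ y) x) ^ q * ENNReal.ofReal (u x)) ^ (1/q)

/-- Weak operator norm of `I_α(·σ) : L^p(σ) → L^{q,∞}(u)`. -/
def weakNormI (n : ℕ) (α p q : ℝ) (u σ : Eucl n → ℝ) : ℝ≥0∞ :=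
  ⨆ (f : Eucl n → ℝ) (_ : Measurable f)
    (_ : (∫⁻ x, ENNReal.ofReal |f x| ^ p * ENNReal.ofReal (σ x)) ≤ 1)
    (t : ℝ) (_ : 0 < t),
    ENNReal.ofReal t *
      (setW u {x | ENNReal.ofReal t < fracIntE n α (fun y => |f y| * σ y) x}) ^ (1/q)

end

noncomputable section Aux14
open MeasureTheory ENNReal Set

def emE : Eucl 1 ≃ᵐ ℝ :=
  (MeasurableEquiv.toLp 2 (Fin 1 → ℝ)).symm.trans (MeasurableEquiv.funUnique (Fin 1) ℝ)

lemma emE_mp : MeasurePreserving emE :=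
  (volume_preserving_funUnique (Fin 1) ℝ).comp (EuclideanSpace.volume_preserving_symm_measurableEquiv_toLp _)

lemma emE_apply (x : Eucl 1) : emE x = x 0 := rfl

lemma cube_eq (a : Fin 1 → ℝ) (h : ℝ) : cube 1 a h = emE ⁻¹' (Ico (a 0) (a 0 + h)) := by
  ext x; simp [cube, emE_apply, Fin.forall_fin_one, mem_Ico, Set.mem_preimage]

lemma vol_cube (a : Fin 1 → ℝ) (h : ℝ) : volume (cube 1 a h) = ENNReal.ofReal h := by
  rw [cube_eq, emE_mp.measure_preimage measurableSet_Ico.nullMeasurableSet, Real.volume_Ico,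
    add_sub_cancel_left]

lemma lint_comp (g : ℝ → ℝ≥0∞) (hg : Measurable g) :
    ∫⁻ x : Eucl 1, g (x 0) = ∫⁻ t, g t := emE_mp.lintegral_comp hg

lemma setLint_comp (g : ℝ → ℝ≥0∞) (s : Set ℝ) :
    ∫⁻ x in emE ⁻¹' s, g (x 0) = ∫⁻ t in s, g t :=
  emE_mp.setLIntegral_comp_preimage_emb emE.measurableEmbedding g s

def sig0 : ℝ → ℝ := (Ico (0:ℝ) 1).indicator (fun _ => 1)

def u0 (β : ℝ) : ℝ → ℝ := (Ici (2:ℝ)).indicator (fun t => t ^ β)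

lemma sig0_nonneg (t : ℝ) : 0 ≤ sig0 t := by
  unfold sig0; by_cases h : t ∈ Ico (0:ℝ) 1 <;> simp [h]

lemma u0_nonneg (β t : ℝ) : 0 ≤ u0 β t := by
  unfold u0; by_cases h : t ∈ Ici (2:ℝ) <;> simp [h]
  exact Real.rpow_nonneg (le_trans (by norm_num) h) β

lemma sig0_measurable : Measurable sig0 :=
  measurable_const.indicator measurableSet_Ico

lemma u0_measurable (β : ℝ) : Measurable (u0 β) :=
  (measurable_id.pow_const β).indicator measurableSet_Ici

lemma ofReal_sig0 (t : ℝ) :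
    ENNReal.ofReal (sig0 t) = (Ico (0:ℝ) 1).indicator (fun _ => (1:ℝ≥0∞)) t := by
  unfold sig0; by_cases h : t ∈ Ico (0:ℝ) 1 <;> simp [h]

lemma lint_sig0 (s : Set ℝ) :
    ∫⁻ t in s, ENNReal.ofReal (sig0 t) = volume (Ico (0:ℝ) 1 ∩ s) := by
  simp only [ofReal_sig0]
  rw [lintegral_indicator measurableSet_Ico, setLIntegral_one,
    Measure.restrict_apply measurableSet_Ico]

lemma lint_sig0_le_one (s : Set ℝ) :
    ∫⁻ t in s, ENNReal.ofReal (sig0 t) ≤ 1 := by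
  rw [lint_sig0]
  calc volume (Ico (0:ℝ) 1 ∩ s) ≤ volume (Ico (0:ℝ) 1) :=
        measure_mono inter_subset_left
    _ = 1 := by rw [Real.volume_Ico]; norm_num

end Aux14

noncomputable section Aux14b
open MeasureTheory ENNReal Set

lemma lint_u0_le {β b : ℝ} (hβ : -1 < β) (hb : 0 ≤ b) {s : Set ℝ} (hs : s ⊆ Iio b) :
    ∫⁻ t in s, ENNReal.ofReal (u0 β t) ≤ ENNReal.ofReal (b ^ (β+1) / (β+1)) := by
  have hβ1 : (0:ℝ) < β + 1 := by linarith
  have hmeas : Measurable ((Ioc (0:ℝ) b).indicator (fun t => ENNReal.ofReal (t ^ β))) :=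
    (ENNReal.measurable_ofReal.comp (measurable_id.pow_const β)).indicator measurableSet_Ioc
  have h1 : ∀ t ∈ s, ENNReal.ofReal (u0 β t) ≤
      (Ioc (0:ℝ) b).indicator (fun t => ENNReal.ofReal (t ^ β)) t := by
    intro t ht
    by_cases h2 : t ∈ Ici (2:ℝ)
    · have htb : t ∈ Ioc (0:ℝ) b := ⟨by linarith [mem_Ici.1 h2], le_of_lt (hs ht)⟩
      rw [indicator_of_mem htb]
      unfold u0; rw [indicator_of_mem h2]
    · unfold u0; rw [indicator_of_notMem h2]; simp
  have hInt : IntegrableOn (fun t => t ^ β) (Ioc (0:ℝ) b) := by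
    have := (intervalIntegral.intervalIntegrable_rpow' (a := 0) (b := b) hβ)
    rwa [intervalIntegrable_iff_integrableOn_Ioc_of_le hb] at this
  calc ∫⁻ t in s, ENNReal.ofReal (u0 β t)
      ≤ ∫⁻ t in s, (Ioc (0:ℝ) b).indicator (fun t => ENNReal.ofReal (t ^ β)) t :=
        setLIntegral_mono hmeas h1
    _ ≤ ∫⁻ t, (Ioc (0:ℝ) b).indicator (fun t => ENNReal.ofReal (t ^ β)) t :=
        setLIntegral_le_lintegral _ _
    _ = ∫⁻ t in Ioc (0:ℝ) b, ENNReal.ofReal (t ^ β) := lintegral_indicator measurableSet_Ioc _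
    _ = ENNReal.ofReal (∫ t in Ioc (0:ℝ) b, t ^ β) := by
        rw [ofReal_integral_eq_lintegral_ofReal hInt]
        exact (ae_restrict_iff' measurableSet_Ioc).2 (ae_of_all _ fun t ht =>
          Real.rpow_nonneg (le_of_lt ht.1) β)
    _ = ENNReal.ofReal (b ^ (β+1) / (β+1)) := by
        rw [← intervalIntegral.integral_of_le hb, integral_rpow (Or.inl hβ),
          Real.zero_rpow (ne_of_gt hβ1), sub_zero]

end Aux14b

noncomputable section Aux14c
open MeasureTheory ENNReal Set

lemma real_key {α p q h : ℝ} (hα1 : α < 1) (hp : 1 < p) (hq : 1 < q) (hh : 0 < h) :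
    h ^ (α + 1/q - 1/p) *
      (((2*h) ^ ((1-α)*q - 1 + 1) / ((1-α)*q - 1 + 1) / h) ^ (1/q) * (1/h) ^ (1 - 1/p)) =
    (2 ^ ((1-α)*q) / ((1-α)*q)) ^ (1/q) := by
  have hq0 : (0:ℝ) < q := by linarith
  have hp0 : (0:ℝ) < p := by linarith
  have hγ : (0:ℝ) < (1-α)*q := by nlinarith
  set γ := (1-α)*q with hγdef
  have e0 : γ - 1 + 1 = γ := by ring
  rw [e0]
  have e1 : (2*h) ^ γ / γ / h = 2 ^ γ / γ * h ^ (γ - 1) := by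
    rw [Real.mul_rpow (by norm_num) hh.le, Real.rpow_sub hh, Real.rpow_one]
    field_simp
  rw [e1, Real.mul_rpow (by positivity) (Real.rpow_nonneg hh.le _),
    ← Real.rpow_mul hh.le]
  rw [one_div h, ← Real.rpow_neg_one h, ← Real.rpow_mul hh.le, neg_one_mul]
  have hsum : h ^ (α + 1/q - 1/p) * (h ^ ((γ-1)*(1/q)) * h ^ (-(1-1/p))) = 1 := by
    rw [← Real.rpow_add hh, ← Real.rpow_add hh,
      show α + 1/q - 1/p + ((γ-1)*(1/q) + -(1-1/p)) = 0 from by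
        rw [hγdef]; field_simp; ring]
    exact Real.rpow_zero h
  linear_combination ((2:ℝ) ^ γ / γ) ^ (1/q) * hsum

end Aux14c

noncomputable section Aux14d
open MeasureTheory ENNReal Set

lemma apq_ne_top {α p q : ℝ} (hα0 : 0 < α) (hα1 : α < 1) (hp : 1 < p) (hpq : p ≤ q) :
    apqAlpha 1 α p q (fun x => u0 ((1-α)*q - 1) (x 0)) (fun x => sig0 (x 0)) ≠ ⊤ := by
  have hq : 1 < q := lt_of_lt_of_le hp hpq
  have hq0 : (0:ℝ) < q := by linarith
  have hp0 : (0:ℝ) < p := by linarith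
  have hpexp : (0:ℝ) < 1 - 1/p := by
    have : 1/p < 1 := (div_lt_one hp0).2 hp
    linarith
  set β : ℝ := (1-α)*q - 1 with hβdef
  have hβ : (-1:ℝ) < β := by rw [hβdef]; nlinarith
  have hβ1 : (0:ℝ) < β + 1 := by linarith
  set C : ℝ≥0∞ := ENNReal.ofReal ((2 ^ ((1-α)*q) / ((1-α)*q)) ^ (1/q)) with hCdef
  have hbound : ∀ (a : Fin 1 → ℝ) (h : ℝ), 0 < h →
      volume (cube 1 a h) ^ (α / ((1:ℕ):ℝ) + 1/q - 1/p) *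
      ((lavg (cube 1 a h) (fun x => ENNReal.ofReal (u0 β (x 0)))) ^ (1/q) *
       (lavg (cube 1 a h) (fun x => ENNReal.ofReal (sig0 (x 0)))) ^ (1 - 1/p)) ≤ C := by
    intro a h hh
    have hexp : α / ((1:ℕ):ℝ) + 1/q - 1/p = α + 1/q - 1/p := by norm_num
    rw [hexp]
    have hU : ∫⁻ x in cube 1 a h, ENNReal.ofReal (u0 β (x 0)) =
        ∫⁻ t in Ico (a 0) (a 0 + h), ENNReal.ofReal (u0 β t) := by
      rw [cube_eq]; exact setLint_comp (fun t => ENNReal.ofReal (u0 β t)) _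
    have hS : ∫⁻ x in cube 1 a h, ENNReal.ofReal (sig0 (x 0)) =
        ∫⁻ t in Ico (a 0) (a 0 + h), ENNReal.ofReal (sig0 t) := by
      rw [cube_eq]; exact setLint_comp (fun t => ENNReal.ofReal (sig0 t)) _
    by_cases hbtwo : a 0 + h ≤ 2
    · have hU0 : lavg (cube 1 a h) (fun x => ENNReal.ofReal (u0 β (x 0))) = 0 := by
        unfold lavg
        rw [hU]
        have hz : ∫⁻ t in Ico (a 0) (a 0 + h), ENNReal.ofReal (u0 β t) = 0 := by
          refine le_antisymm ?_ (zero_le)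
          calc ∫⁻ t in Ico (a 0) (a 0 + h), ENNReal.ofReal (u0 β t)
              ≤ ∫⁻ _ in Ico (a 0) (a 0 + h), (0:ℝ≥0∞) := by
                refine setLIntegral_mono measurable_const (fun t ht => le_of_eq ?_)
                have hnm : t ∉ Ici (2:ℝ) := by
                  simp only [mem_Ici, not_le]; exact lt_of_lt_of_le ht.2 hbtwo
                unfold u0; rw [indicator_of_notMem hnm]; simp
            _ = 0 := by simp
        rw [hz]; simp
      rw [hU0, ENNReal.zero_rpow_of_pos (by positivity), zero_mul, mul_zero]
      exact zero_le
    · by_cases hA1 : 1 ≤ a 0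
      · have hS0 : lavg (cube 1 a h) (fun x => ENNReal.ofReal (sig0 (x 0))) = 0 := by
          unfold lavg
          rw [hS, lint_sig0]
          have hz : Ico (0:ℝ) 1 ∩ Ico (a 0) (a 0 + h) = ∅ := by
            ext t; simp only [mem_inter_iff, mem_Ico, mem_empty_iff_false, iff_false]
            rintro ⟨⟨_, ht1⟩, ⟨ht2, _⟩⟩; linarith
          rw [hz]; simp
        rw [hS0, ENNReal.zero_rpow_of_pos hpexp, mul_zero, mul_zero]
        exact zero_le
      · push_neg at hbtwo hA1
        have h1 : 1 < h := by linarith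
        have hb0 : (0:ℝ) < a 0 + h := by linarith
        have hb2h : a 0 + h ≤ 2 * h := by linarith
        have hX : (0:ℝ) < (2*h) ^ (β+1) / (β+1) / h := by positivity
        have hUb : (∫⁻ t in Ico (a 0) (a 0 + h), ENNReal.ofReal (u0 β t)) ≤
            ENNReal.ofReal ((2*h) ^ (β+1) / (β+1)) := by
          refine (lint_u0_le hβ hb0.le Ico_subset_Iio_self).trans
            (ENNReal.ofReal_le_ofReal ((div_le_div_iff_of_pos_right hβ1).2 ?_))
          exact Real.rpow_le_rpow hb0.le hb2h hβ1.le
        have hSb : (∫⁻ t in Ico (a 0) (a 0 + h), ENNReal.ofReal (sig0 t)) ≤ 1 :=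
          lint_sig0_le_one _
        unfold lavg
        rw [hU, hS, vol_cube]
        calc ENNReal.ofReal h ^ (α + 1/q - 1/p) *
              (((∫⁻ t in Ico (a 0) (a 0 + h), ENNReal.ofReal (u0 β t)) / ENNReal.ofReal h) ^ (1/q) *
               ((∫⁻ t in Ico (a 0) (a 0 + h), ENNReal.ofReal (sig0 t)) / ENNReal.ofReal h) ^ (1 - 1/p))
            ≤ ENNReal.ofReal h ^ (α + 1/q - 1/p) *
              ((ENNReal.ofReal ((2*h) ^ (β+1) / (β+1)) / ENNReal.ofReal h) ^ (1/q) *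
               ((1:ℝ≥0∞) / ENNReal.ofReal h) ^ (1 - 1/p)) := by
              gcongr
          _ = C := by
              rw [← ENNReal.ofReal_div_of_pos hh, ← ENNReal.ofReal_one,
                ← ENNReal.ofReal_div_of_pos hh,
                ENNReal.ofReal_rpow_of_pos hh,
                ENNReal.ofReal_rpow_of_pos hX,
                ENNReal.ofReal_rpow_of_pos (by positivity),
                ← ENNReal.ofReal_mul (by positivity),
                ← ENNReal.ofReal_mul (by positivity),
                hCdef]
              congr 1
              rw [hβdef]
              exact real_key hα1 hp hq hh
  unfold apqAlpha
  exact ne_top_of_le_ne_top ENNReal.ofReal_ne_top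
    (iSup_le fun a => iSup_le fun h => iSup_le fun hh => hbound a h hh)

end Aux14d

noncomputable section Aux14e
open MeasureTheory ENNReal Set

lemma meas_ev : Measurable (fun x : Eucl 1 => x 0) := emE.measurable

lemma lint_inv_top : ∫⁻ t in Ici (2:ℝ), ENNReal.ofReal t⁻¹ = ⊤ := by
  by_contra hfin
  have hI : IntegrableOn (fun t : ℝ => t⁻¹) (Ici (2:ℝ)) := by
    constructor
    · exact measurable_inv.aestronglyMeasurable
    · rw [hasFiniteIntegral_iff_ofReal]
      · exact lt_top_iff_ne_top.2 hfin
      · exact (ae_restrict_iff' measurableSet_Ici).2 (ae_of_all _ fun t ht =>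
          inv_nonneg.2 (by linarith [mem_Ici.1 ht]))
  exact not_IntegrableOn_Ici_inv hI

/-- Pointwise lower bound for the maximal function. -/
lemma maxFn_lb {α : ℝ} (hα0 : 0 < α) (hα1 : α < 1) (x : Eucl 1) (hx : 2 ≤ x 0) :
    ENNReal.ofReal ((x 0 + 1) ^ (α - 1)) ≤
    maxFn 1 α (fun y => sig0 (y 0) * sig0 (y 0)) x := by
  set t := x 0 with ht
  have ht1 : (0:ℝ) < t + 1 := by linarith
  have hmem : x ∈ cube 1 (fun _ => (0:ℝ)) (t + 1) := by
    intro i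
    have : i = 0 := Subsingleton.elim i 0
    rw [this]
    refine ⟨?_, ?_⟩
    · show (0:ℝ) ≤ x 0
      rw [← ht]; linarith
    · show x 0 < 0 + (t + 1)
      rw [← ht]; linarith
  have habs : ∀ y : Eucl 1, ENNReal.ofReal |sig0 (y 0) * sig0 (y 0)| =
      ENNReal.ofReal (sig0 (y 0)) := by
    intro y
    unfold sig0
    by_cases h : y 0 ∈ Ico (0:ℝ) 1 <;> simp [h]
  have hS : ∫⁻ y in cube 1 (fun _ => (0:ℝ)) (t + 1),
      ENNReal.ofReal |sig0 (y 0) * sig0 (y 0)| = 1 := by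
    simp only [habs]
    rw [cube_eq, setLint_comp (fun s => ENNReal.ofReal (sig0 s)), lint_sig0]
    have : Ico (0:ℝ) 1 ∩ Ico ((fun _ : Fin 1 => (0:ℝ)) 0) ((fun _ : Fin 1 => (0:ℝ)) 0 + (t+1)) =
        Ico (0:ℝ) 1 := by
      refine inter_eq_left.2 (fun s hs => ?_)
      exact ⟨hs.1, by have := hs.2; simp only []; linarith⟩
    rw [this, Real.volume_Ico]; norm_num
  have hval : volume (cube 1 (fun _ => (0:ℝ)) (t+1)) ^ (α / ((1:ℕ):ℝ)) *
      lavg (cube 1 (fun _ => (0:ℝ)) (t+1)) (fun y => ENNReal.ofReal |sig0 (y 0) * sig0 (y 0)|) =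
      ENNReal.ofReal ((t + 1) ^ (α - 1)) := by
    unfold lavg
    rw [hS, vol_cube]
    rw [show α / ((1:ℕ):ℝ) = α from by norm_num]
    rw [ENNReal.ofReal_rpow_of_pos ht1, one_div,
      ← ENNReal.ofReal_inv_of_pos ht1, ← ENNReal.ofReal_mul (by positivity)]
    congr 1
    rw [Real.rpow_sub ht1, Real.rpow_one, div_eq_mul_inv]
  calc ENNReal.ofReal ((t + 1) ^ (α - 1)) = _ := hval.symm
    _ ≤ maxFn 1 α (fun y => sig0 (y 0) * sig0 (y 0)) x := by
        unfold maxFn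
        refine le_iSup_of_le (fun _ => (0:ℝ)) ?_
        refine le_iSup_of_le (t+1) ?_
        refine le_iSup_of_le ht1 ?_
        exact le_iSup_of_le hmem le_rfl

end Aux14e

noncomputable section Aux14f
open MeasureTheory ENNReal Set

lemma div_top {α p q : ℝ} (hα0 : 0 < α) (hα1 : α < 1) (hp : 1 < p) (hpq : p ≤ q) :
    ∫⁻ x, (maxFn 1 α (fun y => sig0 (y 0) * sig0 (y 0)) x) ^ q *
      ENNReal.ofReal (u0 ((1-α)*q - 1) (x 0)) = ⊤ := by
  have hq : 1 < q := lt_of_lt_of_le hp hpq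
  have hq0 : (0:ℝ) < q := by linarith
  set β : ℝ := (1-α)*q - 1 with hβdef
  set c : ℝ := (α-1)*q with hcdef
  have hc : c < 0 := by rw [hcdef]; nlinarith
  have h2c : (0:ℝ) < 2 ^ c := Real.rpow_pos_of_pos two_pos c
  have hs : MeasurableSet (emE ⁻¹' (Ici (2:ℝ))) := emE.measurable measurableSet_Ici
  have A : ∫⁻ t in Ici (2:ℝ), ENNReal.ofReal (2 ^ c) * ENNReal.ofReal t⁻¹ = ⊤ := by
    rw [lintegral_const_mul' _ _ ENNReal.ofReal_ne_top, lint_inv_top,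
      ENNReal.mul_top (by simpa using h2c.le.lt_of_ne' (ne_of_gt h2c) : ENNReal.ofReal (2^c) ≠ 0)]
  have B : ∀ t, t ∈ Ici (2:ℝ) →
      ENNReal.ofReal (2 ^ c) * ENNReal.ofReal t⁻¹ ≤
      ENNReal.ofReal ((t + 1) ^ (α - 1)) ^ q * ENNReal.ofReal (u0 β t) := by
    intro t ht
    have ht2 : (2:ℝ) ≤ t := mem_Ici.1 ht
    have ht0 : (0:ℝ) < t := by linarith
    have ht1 : (0:ℝ) < t + 1 := by linarith
    have hu : u0 β t = t ^ β := by unfold u0; rw [indicator_of_mem ht]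
    rw [hu, ENNReal.ofReal_rpow_of_pos (Real.rpow_pos_of_pos ht1 _),
      ← Real.rpow_mul ht1.le, ← ENNReal.ofReal_mul (Real.rpow_nonneg ht1.le _),
      ← ENNReal.ofReal_mul h2c.le]
    apply ENNReal.ofReal_le_ofReal
    have key : 2 ^ c * t⁻¹ = (2*t) ^ c * t ^ β := by
      rw [Real.mul_rpow (by norm_num) ht0.le, mul_assoc, ← Real.rpow_add ht0,
        show c + β = -1 from by rw [hcdef, hβdef]; ring, Real.rpow_neg_one]
    rw [key]
    have hle : (2*t) ^ c ≤ (t+1) ^ c :=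
      Real.rpow_le_rpow_of_nonpos ht1 (by linarith) hc.le
    exact mul_le_mul_of_nonneg_right hle (Real.rpow_nonneg ht0.le _)
  refine le_antisymm le_top ?_
  calc (⊤:ℝ≥0∞) = ∫⁻ t in Ici (2:ℝ), ENNReal.ofReal (2 ^ c) * ENNReal.ofReal t⁻¹ := A.symm
    _ ≤ ∫⁻ t in Ici (2:ℝ), ENNReal.ofReal ((t + 1) ^ (α - 1)) ^ q * ENNReal.ofReal (u0 β t) :=
        lintegral_mono_ae ((ae_restrict_iff' measurableSet_Ici).2 (ae_of_all _ B))
    _ = ∫⁻ x in emE ⁻¹' (Ici (2:ℝ)),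
          ENNReal.ofReal ((x 0 + 1) ^ (α - 1)) ^ q * ENNReal.ofReal (u0 β (x 0)) :=
        (setLint_comp (fun t => ENNReal.ofReal ((t + 1) ^ (α - 1)) ^ q *
          ENNReal.ofReal (u0 β t)) _).symm
    _ ≤ ∫⁻ x in emE ⁻¹' (Ici (2:ℝ)),
          (maxFn 1 α (fun y => sig0 (y 0) * sig0 (y 0)) x) ^ q * ENNReal.ofReal (u0 β (x 0)) := by
        refine lintegral_mono_ae ((ae_restrict_iff' hs).2 (ae_of_all _ fun x hx => ?_))
        exact mul_le_mul' (ENNReal.rpow_le_rpow (maxFn_lb hα0 hα1 x hx) hq0.le) le_rfl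
    _ ≤ _ := setLIntegral_le_lintegral _ _

lemma lp_fin {p : ℝ} (_hp : 1 < p) :
    ∫⁻ x : Eucl 1, ENNReal.ofReal (sig0 (x 0)) ^ p * ENNReal.ofReal (sig0 (x 0)) = 1 := by
  have hpt : (fun x : Eucl 1 => ENNReal.ofReal (sig0 (x 0)) ^ p * ENNReal.ofReal (sig0 (x 0))) =
      fun x => (Ico (0:ℝ) 1).indicator (fun _ => (1:ℝ≥0∞)) (x 0) := by
    funext x
    unfold sig0
    by_cases h : x 0 ∈ Ico (0:ℝ) 1 <;> simp [h]
  rw [hpt, lint_comp _ (measurable_const.indicator measurableSet_Ico),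
    lintegral_indicator measurableSet_Ico, setLIntegral_one, Real.volume_Ico]
  norm_num

lemma sig_weight : Weight (fun x : Eucl 1 => sig0 (x 0)) := by
  refine ⟨sig0_measurable.comp meas_ev, fun x => sig0_nonneg _, ?_⟩
  have hsub : emE ⁻¹' (Ico (0:ℝ) 1) ⊆ {x : Eucl 1 | 0 < sig0 (x 0)} := by
    intro x hx
    show (0:ℝ) < sig0 (x 0)
    unfold sig0; rw [indicator_of_mem (show x 0 ∈ Ico (0:ℝ) 1 from hx)]; norm_num
  have hvol : volume (emE ⁻¹' (Ico (0:ℝ) 1)) = 1 := by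
    rw [emE_mp.measure_preimage measurableSet_Ico.nullMeasurableSet, Real.volume_Ico]
    norm_num
  calc (0:ℝ≥0∞) < 1 := by norm_num
    _ = volume (emE ⁻¹' (Ico (0:ℝ) 1)) := hvol.symm
    _ ≤ volume {x : Eucl 1 | 0 < sig0 (x 0)} := measure_mono hsub

lemma u_weight {β : ℝ} : Weight (fun x : Eucl 1 => u0 β (x 0)) := by
  refine ⟨(u0_measurable β).comp meas_ev, fun x => u0_nonneg _ _, ?_⟩
  have hsub : emE ⁻¹' (Ici (2:ℝ)) ⊆ {x : Eucl 1 | 0 < u0 β (x 0)} := by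
    intro x hx
    show (0:ℝ) < u0 β (x 0)
    unfold u0; rw [indicator_of_mem (show x 0 ∈ Ici (2:ℝ) from hx)]
    exact Real.rpow_pos_of_pos (by linarith [mem_Ici.1 (show x 0 ∈ Ici (2:ℝ) from hx)]) β
  have hvol : volume (emE ⁻¹' (Ici (2:ℝ))) = ⊤ := by
    rw [emE_mp.measure_preimage measurableSet_Ici.nullMeasurableSet, Real.volume_Ici]
  refine lt_of_lt_of_le ?_ (measure_mono hsub)
  rw [hvol]; exact ENNReal.zero_lt_top

end Aux14f

/-- `A_{p,q}^α` is not sufficient for the strong type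
inequality for the fractional maximal operator; counterexample on `ℝ`. -/
theorem statement14 (α p q : ℝ) (hα0 : 0 < α) (hα1 : α < 1)
    (hp : 1 < p) (hpq : p ≤ q) :
    ∃ u σ f : Eucl 1 → ℝ, Weight u ∧ Weight σ ∧
      apqAlpha 1 α p q u σ ≠ ⊤ ∧
      Measurable f ∧ (∀ x, 0 ≤ f x) ∧
      (∫⁻ x, ENNReal.ofReal (f x) ^ p * ENNReal.ofReal (σ x)) < ⊤ ∧
      (∫⁻ x, (maxFn 1 α (fun y => f y * σ y) x) ^ q * ENNReal.ofReal (u x)) = ⊤ := by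
  refine ⟨fun x => u0 ((1-α)*q - 1) (x 0), fun x => sig0 (x 0), fun x => sig0 (x 0),
    u_weight, sig_weight, apq_ne_top hα0 hα1 hp hpq,
    sig0_measurable.comp meas_ev, fun x => sig0_nonneg _, ?_, ?_⟩
  · rw [lp_fin hp]
    exact ENNReal.one_lt_top
  · exact div_top hα0 hα1 hp hpq
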